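/- arXiv:1401.3708 — 4 statements merged into one kernel-verified Lean document; each statement's English description precedes it below -/
import Mathlib

section
/- Let n ≥ 1 and let x = (x₁,…,x_n) ∈ ℝⁿ be totally irrational, i.e., the (n+1)-tuple (x₁,…,x_n,1) is rationally independent (equivalently rank(G_x) = n+1). Then orb(x) = {y ∈ ℝⁿ : G_y = G_x}. -/
/-- `y` is in the `GL(n,ℤ) ⋉ ℤⁿ`-orbit of `x`, i.e. `y = U x + t` for an integer
matrix `U` with `det U = ±1` and an integer vector `t`. -/
def SameOrbit (n : ℕ) (x y : Fin n → ℝ) : Prop :=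
  ∃ (U : Matrix (Fin n) (Fin n) ℤ) (t : Fin n → ℤ),
    (U.det = 1 ∨ U.det = -1) ∧
    ∀ i, y i = (∑ j, (U i j : ℝ) * x j) + (t i : ℝ)

/-- The subgroup `G_x = ℤ + ℤx₁ + ⋯ + ℤxₙ` of the additive reals. -/
def Gx {n : ℕ} (x : Fin n → ℝ) : AddSubgroup ℝ :=
  AddSubgroup.closure (insert (1 : ℝ) (Set.range x))

/-- A point of `ℝⁿ` is rational if all its coordinates are rational. -/
def IsRationalPoint {n : ℕ} (y : Fin n → ℝ) : Prop :=
  ∀ i, ∃ q : ℚ, y i = (q : ℝ)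

/-- The denominator of a rational point: the least positive integer `d`
with `d • y ∈ ℤⁿ`. -/
noncomputable def den {n : ℕ} (y : Fin n → ℝ) : ℕ :=
  sInf {d : ℕ | 0 < d ∧ ∀ i, ∃ m : ℤ, (d : ℝ) * y i = (m : ℝ)}

/-- The homogeneous correspondent `ỹ = den(y)·(y,1)`, viewed as a real vector. -/
noncomputable def tildeR {n : ℕ} (y : Fin n → ℝ) : Fin (n + 1) → ℝ :=
  fun i => (den y : ℝ) * (Fin.snoc y (1 : ℝ) : Fin (n + 1) → ℝ) i

/-- A rational `m`-simplex `conv(v₀,…,v_m) ⊆ ℝⁿ` is regular if the homogeneous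
correspondents `ṽ₀,…,ṽ_m ∈ ℤ^{n+1}` can be extended to a ℤ-basis of `ℤ^{n+1}`. -/
def IsRegularSimplex {n m : ℕ} (v : Fin (m + 1) → (Fin n → ℝ)) : Prop :=
  AffineIndependent ℝ v ∧ (∀ k, IsRationalPoint (v k)) ∧
  ∃ (b : Module.Basis (Fin (n + 1)) ℤ (Fin (n + 1) → ℤ)) (f : Fin (m + 1) ↪ Fin (n + 1)),
    ∀ k i, ((b (f k)) i : ℝ) = tildeR (v k) i

/-- A rational hyperplane in `ℝⁿ`. -/
def IsRatHyperplane {n : ℕ} (H : Set (Fin n → ℝ)) : Prop :=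
  ∃ (h : Fin n → ℚ) (k : ℚ), h ≠ 0 ∧ H = {z | (∑ i, (h i : ℝ) * z i) = (k : ℝ)}

/-- A rational affine space: an intersection of rational hyperplanes. -/
def IsRatAffineSpace {n : ℕ} (F : Set (Fin n → ℝ)) : Prop :=
  ∃ S : Set (Set (Fin n → ℝ)), (∀ H ∈ S, IsRatHyperplane H) ∧ F = ⋂₀ S

/-- `F_x`: the intersection of all rational hyperplanes containing `x`
(`= ℝⁿ` if there is no such hyperplane). -/
def Fx {n : ℕ} (x : Fin n → ℝ) : Set (Fin n → ℝ) :=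
  ⋂₀ {H | IsRatHyperplane H ∧ x ∈ H}

/-- The (affine) dimension of a subset of `ℝⁿ`. -/
noncomputable def affDim {n : ℕ} (F : Set (Fin n → ℝ)) : ℕ :=
  Module.finrank ℝ ↥(vectorSpan ℝ F)

/-- `d_F`: the least denominator of a rational point of `F`. -/
noncomputable def dF {n : ℕ} (F : Set (Fin n → ℝ)) : ℕ :=
  sInf {d : ℕ | ∃ y ∈ F, IsRationalPoint y ∧ den y = d}

/-- `c_F`: the smallest possible denominator of a vertex of a regular `n`-simplex
`conv(v₀,…,v_n) ⊆ ℝⁿ` with `v₀,…,v_e ∈ F`. -/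
noncomputable def cF {n : ℕ} (e : ℕ) (F : Set (Fin n → ℝ)) : ℕ :=
  sInf {c : ℕ | ∃ (v : Fin (n + 1) → (Fin n → ℝ)) (i : Fin (n + 1)),
    IsRegularSimplex v ∧ (∀ k : Fin (n + 1), (k : ℕ) ≤ e → v k ∈ F) ∧ den (v i) = c}

/-- `c_x = c_{F_x}`. -/
noncomputable def cx {n : ℕ} (x : Fin n → ℝ) : ℕ := cF (affDim (Fx x)) (Fx x)

/-- Membership in the Farey sequence `𝔉_d`. -/
def InFarey (d : ℕ) (x : ℚ) : Prop := 0 ≤ x ∧ x ≤ 1 ∧ x.den ≤ d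

/-- `x` and `y` are neighbors (contiguous elements) of the Farey sequence `𝔉_d`. -/
def FareyNeighbor (d : ℕ) (x y : ℚ) : Prop :=
  InFarey d x ∧ InFarey d y ∧ x ≠ y ∧
  ∀ t : ℚ, InFarey d t → ¬ (min x y < t ∧ t < max x y)

/-- `y` is the companion of `x`: `comp 0 = 1`, `comp 1 = 0`, `comp (1/2) = 1`, and
for denominator `d ≥ 3`, `comp x` is the neighbor of `x` in `𝔉_d` with smaller
denominator than the other neighbor. -/
def IsCompanion (x y : ℚ) : Prop :=
  (x = 0 ∧ y = 1) ∨ (x = 1 ∧ y = 0) ∨ (x = 1/2 ∧ y = 1) ∨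
  (3 ≤ x.den ∧ FareyNeighbor x.den x y ∧
    ∀ z : ℚ, FareyNeighbor x.den x z → z ≠ y → y.den < z.den)

section Aux

lemma myrange_snoc {n : ℕ} (x : Fin n → ℝ) :
    Set.range (Fin.snoc x (1:ℝ) : Fin (n+1) → ℝ) = insert (1:ℝ) (Set.range x) := by
  ext r
  constructor
  · rintro ⟨i, rfl⟩
    refine Fin.lastCases ?_ (fun j => ?_) i
    · simp
    · simp [Fin.snoc_castSucc]
  · rintro (rfl | ⟨i, rfl⟩)
    · exact ⟨Fin.last n, by simp⟩
    · exact ⟨Fin.castSucc i, by simp⟩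

lemma myGx_eq_span {n : ℕ} (x : Fin n → ℝ) :
    AddSubgroup.closure (insert (1 : ℝ) (Set.range x))
      = (Submodule.span ℤ (Set.range (Fin.snoc x (1:ℝ) : Fin (n+1) → ℝ))).toAddSubgroup := by
  rw [Submodule.span_int_eq_addSubgroupClosure, myrange_snoc]

lemma myspan_le_of_repr {n : ℕ} (v w : Fin (n+1) → ℝ) (A : Matrix (Fin (n+1)) (Fin (n+1)) ℤ)
    (h : ∀ i, ∑ j, (A i j) • v j = w i) :
    Submodule.span ℤ (Set.range w) ≤ Submodule.span ℤ (Set.range v) := by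
  rw [Submodule.span_le]
  rintro _ ⟨i, rfl⟩
  rw [← h i]
  exact Submodule.sum_mem _ fun j _ =>
    Submodule.smul_mem _ _ (Submodule.subset_span ⟨j, rfl⟩)

lemma mydet_last_row_single {n : ℕ} (M : Matrix (Fin (n+1)) (Fin (n+1)) ℤ)
    (h : ∀ j, M (Fin.last n) j = (Pi.single (Fin.last n) (1:ℤ) : Fin (n+1) → ℤ) j) :
    M.det = (M.submatrix Fin.castSucc Fin.castSucc).det := by
  rw [Matrix.det_succ_row M (Fin.last n)]
  rw [Finset.sum_eq_single (Fin.last n)]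
  · rw [h, Pi.single_eq_same, Fin.succAbove_last]
    have : ((-1 : ℤ)) ^ (((Fin.last n : Fin (n+1)) : ℕ) + ((Fin.last n : Fin (n+1)) : ℕ)) = 1 :=
      Even.neg_one_pow ⟨n, by simp [Fin.val_last, two_mul]⟩
    rw [this]; ring
  · intro j _ hj
    rw [h, Pi.single_eq_of_ne hj]
    ring
  · simp

end Aux

/-- If `x ∈ ℝⁿ` (`n ≥ 1`) is totally irrational, i.e. the
`(n+1)`-tuple `(x₁,…,xₙ,1)` is rationally independent (equivalently
`rank G_x = n+1`), then `orb(x) = {y : G_y = G_x}`. -/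

theorem orbit_eq_of_totally_irrational (n : ℕ) (hn : 1 ≤ n) (x : Fin n → ℝ)
    (hx : LinearIndependent ℚ (Fin.snoc x (1 : ℝ) : Fin (n + 1) → ℝ)) :
    {y | SameOrbit n x y} = {y | Gx y = Gx x} := by
  set v : Fin (n+1) → ℝ := (Fin.snoc x (1 : ℝ) : Fin (n+1) → ℝ) with hv
  -- ℤ-linear independence of v
  have hvZ : LinearIndependent ℤ v := by
    refine hx.restrict_scalars ?_
    intro a b hab
    simpa [zsmul_eq_mul] using hab
  ext y
  simp only [Set.mem_setOf_eq]
  constructor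
  · -- orbit ⟹ same Gx
    rintro ⟨U, t, hdet, hy⟩
    set w : Fin (n+1) → ℝ := (Fin.snoc y (1 : ℝ) : Fin (n+1) → ℝ) with hw
    set M : Matrix (Fin (n+1)) (Fin (n+1)) ℤ :=
      Matrix.of (Fin.snoc (fun i => (Fin.snoc (U i) (t i) : Fin (n+1) → ℤ))
        (Pi.single (Fin.last n) 1)) with hM
    have hMlast : ∀ j, M (Fin.last n) j = (Pi.single (Fin.last n) (1:ℤ) : Fin (n+1) → ℤ) j := by
      intro j; simp [hM]
    have hMrow : ∀ i, ∑ j, (M i j) • v j = w i := by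
      intro i
      refine Fin.lastCases ?_ (fun i0 => ?_) i
      · rw [Fin.sum_univ_castSucc]
        have h1 : ∀ j : Fin n, M (Fin.last n) (Fin.castSucc j) = 0 := by
          intro j
          rw [hMlast, Pi.single_eq_of_ne (by simp [Fin.ext_iff, Fin.castSucc_lt_last j |>.ne])]
        simp only [h1, zero_smul, Finset.sum_const_zero, zero_add]
        rw [hMlast, Pi.single_eq_same]
        simp [hw, hv]
      · rw [Fin.sum_univ_castSucc]
        have h1 : ∀ j : Fin n, M (Fin.castSucc i0) (Fin.castSucc j) = U i0 j := by
          intro j; simp [hM]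
        have h2 : M (Fin.castSucc i0) (Fin.last n) = t i0 := by simp [hM]
        have h3 : ∀ j : Fin n, v (Fin.castSucc j) = x j := fun j => by simp [hv]
        have h4 : v (Fin.last n) = 1 := by simp [hv]
        have h5 : w (Fin.castSucc i0) = y i0 := by simp [hw]
        rw [h2, h4, h5, hy i0]
        simp only [h1, h3, zsmul_eq_mul, smul_eq_mul, mul_one]
    -- det M = det U
    have hsub : M.submatrix Fin.castSucc Fin.castSucc = U := by
      ext i j; simp [hM]
    have hdetM : M.det = U.det := by rw [mydet_last_row_single M hMlast, hsub]
    have hu : IsUnit M.det := by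
      rw [hdetM]
      rcases hdet with h | h <;> rw [h] <;> simp
    set N : Matrix (Fin (n+1)) (Fin (n+1)) ℤ := M⁻¹ with hN
    have hNM : N * M = 1 := Matrix.nonsing_inv_mul M hu
    have hNrow : ∀ i, ∑ j, (N i j) • w j = v i := by
      intro i
      calc ∑ j, (N i j) • w j = ∑ j, (N i j) • ∑ k, (M j k) • v k := by
            simp only [hMrow]
        _ = ∑ k, ((N * M) i k) • v k := by
            simp only [Matrix.mul_apply, Finset.smul_sum, smul_smul, Finset.sum_smul]
            exact Finset.sum_comm
        _ = v i := by
            rw [hNM]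
            simp [Matrix.one_apply, ite_smul]
    have hspan : Submodule.span ℤ (Set.range w) = Submodule.span ℤ (Set.range v) :=
      le_antisymm (myspan_le_of_repr v w M hMrow) (myspan_le_of_repr w v N hNrow)
    show Gx y = Gx x
    rw [Gx, Gx, myGx_eq_span y, myGx_eq_span x]
    rw [← hv, ← hw, hspan]
  · -- same Gx ⟹ orbit
    intro hG
    set w : Fin (n+1) → ℝ := (Fin.snoc y (1 : ℝ) : Fin (n+1) → ℝ) with hw
    have hspan : Submodule.span ℤ (Set.range w) = Submodule.span ℤ (Set.range v) := by
      apply Submodule.toAddSubgroup_injective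
      rw [← myGx_eq_span y, ← myGx_eq_span x]
      exact hG
    -- coefficients for each w i in terms of v
    have hmem : ∀ i, w i ∈ Submodule.span ℤ (Set.range v) := by
      intro i
      rw [← hspan]
      exact Submodule.subset_span ⟨i, rfl⟩
    have hmem' : ∀ i, v i ∈ Submodule.span ℤ (Set.range w) := by
      intro i
      rw [hspan]
      exact Submodule.subset_span ⟨i, rfl⟩
    choose C hC using fun i => (Submodule.mem_span_range_iff_exists_fun ℤ).mp (hmem i)
    choose D hD using fun i => (Submodule.mem_span_range_iff_exists_fun ℤ).mp (hmem' i)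
    set M : Matrix (Fin (n+1)) (Fin (n+1)) ℤ := Matrix.of C with hM
    set N : Matrix (Fin (n+1)) (Fin (n+1)) ℤ := Matrix.of D with hN
    -- N * M = 1 by linear independence
    have hcomp : ∀ i k, (N * M) i k = (1 : Matrix (Fin (n+1)) (Fin (n+1)) ℤ) i k := by
      intro i k
      have key : ∑ k, ((N * M) i k - (1 : Matrix (Fin (n+1)) (Fin (n+1)) ℤ) i k) • v k = 0 := by
        have e1 : ∑ k, ((N * M) i k) • v k = v i := by
          calc ∑ k, ((N * M) i k) • v k
              = ∑ j, (N i j) • ∑ k, (M j k) • v k := by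
                simp only [Matrix.mul_apply, Finset.smul_sum, smul_smul, Finset.sum_smul]
                exact Finset.sum_comm.symm
            _ = ∑ j, (N i j) • w j := by
                refine Finset.sum_congr rfl fun j _ => ?_
                rw [show (∑ k, (M j k) • v k) = w j from hC j]
            _ = v i := hD i
        have e2 : ∑ k, ((1 : Matrix (Fin (n+1)) (Fin (n+1)) ℤ) i k) • v k = v i := by
          simp [Matrix.one_apply, ite_smul]
        simp only [sub_smul, Finset.sum_sub_distrib, e1, e2, sub_self]
      have := Fintype.linearIndependent_iff.mp hvZ _ key k
      linarith [this]
    have hNM : N * M = 1 := by ext i k; exact hcomp i k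
    have hu : IsUnit M.det := IsUnit.of_mul_eq_one _ (by
      rw [← Matrix.det_mul, mul_eq_one_comm.mp hNM, Matrix.det_one])
    -- last row of M is Pi.single last 1
    have hMlast : ∀ j, M (Fin.last n) j = (Pi.single (Fin.last n) (1:ℤ) : Fin (n+1) → ℤ) j := by
      have key : ∑ k, (M (Fin.last n) k - (Pi.single (Fin.last n) (1:ℤ) : Fin (n+1) → ℤ) k) • v k = 0 := by
        have e1 : ∑ k, (M (Fin.last n) k) • v k = 1 := by
          have := hC (Fin.last n)
          rwa [show w (Fin.last n) = 1 by simp [hw]] at this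
        have e2 : ∑ k, ((Pi.single (Fin.last n) (1:ℤ) : Fin (n+1) → ℤ) k) • v k = 1 := by
          rw [Finset.sum_eq_single (Fin.last n)]
          · simp [hv]
          · intro j _ hj; rw [Pi.single_eq_of_ne hj]; simp
          · simp
        simp only [sub_smul, Finset.sum_sub_distrib, e1, e2, sub_self]
      intro j
      have := Fintype.linearIndependent_iff.mp hvZ _ key j
      linarith [this]
    refine ⟨M.submatrix Fin.castSucc Fin.castSucc, fun i => M (Fin.castSucc i) (Fin.last n),
      ?_, ?_⟩
    · have hdetM := mydet_last_row_single M hMlast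
      have : IsUnit (M.submatrix Fin.castSucc Fin.castSucc).det := by rwa [← hdetM]
      exact Int.isUnit_iff.mp this
    · intro i
      have := hC (Fin.castSucc i)
      rw [show w (Fin.castSucc i) = y i by simp [hw]] at this
      rw [← this, Fin.sum_univ_castSucc]
      have h3 : ∀ j : Fin n, v (Fin.castSucc j) = x j := fun j => by simp [hv]
      have h4 : v (Fin.last n) = 1 := by simp [hv]
      simp only [h3, h4, Matrix.submatrix_apply, zsmul_eq_mul, smul_eq_mul, mul_one]
      rfl
end

section
/- Let T = conv(v₁,…,v_{n+1}) and T' = conv(v'₁,…,v'_{n+1}) be regular n-simplexes in ℝⁿ with den(v_i) = den(v'_i) for all i = 1,…,n+1. Then there is a unique γ ∈ 𝒢_n such that γ(v_i) = v'_i for every i = 1,…,n+1. -/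
lemma den_mem {n : ℕ} {y : Fin n → ℝ} (hy : IsRationalPoint y) :
    0 < den y ∧ ∀ i, ∃ m : ℤ, ((den y : ℕ) : ℝ) * y i = (m : ℝ) := by
  have hne : {d : ℕ | 0 < d ∧ ∀ i, ∃ m : ℤ, (d : ℝ) * y i = (m : ℝ)}.Nonempty := by
    choose q hq using hy
    refine ⟨∏ i, (q i).den, Finset.prod_pos (fun i _ => (q i).pos), fun i => ?_⟩
    obtain ⟨c, hc⟩ := Finset.dvd_prod_of_mem (fun j => (q j).den) (Finset.mem_univ i)
    refine ⟨(q i).num * c, ?_⟩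
    have h2 : ((∏ j, (q j).den : ℕ) : ℚ) * q i = (((q i).num * (c : ℤ)) : ℚ) := by
      rw [hc]; push_cast
      rw [mul_right_comm, Rat.den_mul_eq_num]
    rw [hq i]
    exact_mod_cast h2
  exact Nat.sInf_mem hne

/-- If `T = conv(v₀,…,vₙ)` and `T' = conv(v'₀,…,v'ₙ)` are regular
`n`-simplexes in `ℝⁿ` with `den(vᵢ) = den(v'ᵢ)` for all `i`, then there is a unique
`γ ∈ 𝒢ₙ` (i.e. a unique pair `(U, t)` with `det U = ±1`, `t ∈ ℤⁿ`) such that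
`γ(vᵢ) = v'ᵢ` for every `i`. -/
theorem exists_unique_affine_map_of_regular_simplexes (n : ℕ)
    (v v' : Fin (n + 1) → (Fin n → ℝ))
    (hv : IsRegularSimplex v) (hv' : IsRegularSimplex v')
    (hden : ∀ i, den (v i) = den (v' i)) :
    ∃! γ : Matrix (Fin n) (Fin n) ℤ × (Fin n → ℤ),
      (γ.1.det = 1 ∨ γ.1.det = -1) ∧
      ∀ k i, v' k i = (∑ j, (γ.1 i j : ℝ) * v k j) + (γ.2 i : ℝ) := by
  classical
  obtain ⟨hvAI, hvQ, b, f, hb⟩ := hv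
  obtain ⟨hv'AI, hv'Q, b', f', hb'⟩ := hv'
  -- the embeddings are bijective
  have hf : Function.Bijective f := Finite.injective_iff_bijective.mp f.injective
  have hf' : Function.Bijective f' := Finite.injective_iff_bijective.mp f'.injective
  set B : Module.Basis (Fin (n + 1)) ℤ (Fin (n + 1) → ℤ) :=
    b.reindex (Equiv.ofBijective f hf).symm with hBdef
  set B' : Module.Basis (Fin (n + 1)) ℤ (Fin (n + 1) → ℤ) :=
    b'.reindex (Equiv.ofBijective f' hf').symm with hB'def
  have hB : ∀ k i, ((B k) i : ℝ) = tildeR (v k) i := by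
    intro k i
    rw [hBdef, Module.Basis.reindex_apply, Equiv.symm_symm, Equiv.ofBijective_apply]
    exact hb k i
  have hB' : ∀ k i, ((B' k) i : ℝ) = tildeR (v' k) i := by
    intro k i
    rw [hB'def, Module.Basis.reindex_apply, Equiv.symm_symm, Equiv.ofBijective_apply]
    exact hb' k i
  have htlast : ∀ y : Fin n → ℝ, tildeR y (Fin.last n) = (den y : ℝ) := by
    intro y; simp [tildeR]
  have htcast : ∀ (y : Fin n → ℝ) (i : Fin n),
      tildeR y (Fin.castSucc i) = (den y : ℝ) * y i := by
    intro y i; simp [tildeR]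
  have dpos : ∀ k, (0 : ℝ) < (den (v k) : ℝ) := by
    intro k; exact_mod_cast (den_mem (hvQ k)).1
  have hlastB : ∀ k, B k (Fin.last n) = (den (v k) : ℤ) := by
    intro k
    have := hB k (Fin.last n)
    rw [htlast] at this
    exact_mod_cast this
  have hlastB' : ∀ k, B' k (Fin.last n) = (den (v' k) : ℤ) := by
    intro k
    have := hB' k (Fin.last n)
    rw [htlast] at this
    exact_mod_cast this
  set L : (Fin (n + 1) → ℤ) ≃ₗ[ℤ] (Fin (n + 1) → ℤ) := B.equiv B' (Equiv.refl _) with hLdef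
  set M : Matrix (Fin (n + 1)) (Fin (n + 1)) ℤ :=
    LinearMap.toMatrix' (L : (Fin (n + 1) → ℤ) →ₗ[ℤ] (Fin (n + 1) → ℤ)) with hMdef
  have hMmul : ∀ x, M.mulVec x = L x := by
    intro x
    rw [← Matrix.toLin'_apply, hMdef, Matrix.toLin'_toMatrix']
    rfl
  have hLB : ∀ k, L (B k) = B' k := by
    intro k
    rw [hLdef, Module.Basis.equiv_apply]
    rfl
  have hMB : ∀ k, M.mulVec (B k) = B' k := by
    intro k
    rw [hMmul, hLB]
  -- last row of M is the last standard basis vector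
  have hrow : ∀ j, M (Fin.last n) j = if j = Fin.last n then 1 else 0 := by
    have hφ : (LinearMap.proj (Fin.last n)).comp
        (L : (Fin (n + 1) → ℤ) →ₗ[ℤ] (Fin (n + 1) → ℤ)) =
        (LinearMap.proj (Fin.last n) : (Fin (n + 1) → ℤ) →ₗ[ℤ] ℤ) := by
      apply B.ext
      intro k
      simp only [LinearMap.comp_apply, LinearMap.coe_proj, Function.eval, LinearEquiv.coe_coe]
      rw [hLB k, hlastB, hlastB', hden k]
    intro j
    have h1 : M.mulVec (Pi.single j 1) = L (Pi.single j 1) := hMmul _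
    have h2 := congrFun h1 (Fin.last n)
    rw [Matrix.mulVec_single] at h2
    have h3 : (L (Pi.single j 1)) (Fin.last n) = (Pi.single j 1 : Fin (n + 1) → ℤ) (Fin.last n) := by
      have := congrFun (congrArg (fun g => g.toFun) hφ) (Pi.single j 1)
      simpa using this
    replace h2 : M (Fin.last n) j = L (Pi.single j 1) (Fin.last n) := by simpa using h2
    rw [h2, h3, Pi.single_apply]
    by_cases hj : j = Fin.last n <;> simp [hj, eq_comm]
  set U : Matrix (Fin n) (Fin n) ℤ := M.submatrix Fin.castSucc Fin.castSucc with hUdef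
  set t : Fin n → ℤ := fun i => M (Fin.castSucc i) (Fin.last n) with htdef
  have hMrow : ∀ (i : Fin n) (j : Fin n), M (Fin.castSucc i) (Fin.castSucc j) = U i j := by
    intro i j; rw [hUdef]; rfl
  -- determinant of M is ±1
  have hMdet : M.det = 1 ∨ M.det = -1 := by
    have hu : IsUnit (LinearMap.det (L : (Fin (n + 1) → ℤ) →ₗ[ℤ] (Fin (n + 1) → ℤ))) :=
      L.isUnit_det'
    rw [hMdef, LinearMap.det_toMatrix']
    exact Int.isUnit_iff.mp hu
  -- determinant of M equals determinant of U
  have hdetUM : M.det = U.det := by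
    rw [Matrix.det_succ_row M (Fin.last n)]
    rw [Finset.sum_eq_single (Fin.last n)]
    · rw [hrow]
      simp only [if_pos rfl, mul_one]
      have : ((Fin.last n : ℕ) + (Fin.last n : ℕ)) = 2 * n := by
        simp [Fin.val_last]; ring
      rw [this, pow_mul]
      norm_num
      rw [hUdef]
    · intro j _ hj
      rw [hrow, if_neg hj]
      ring
    · intro h; exact absurd (Finset.mem_univ _) h
  have hUdet : U.det = 1 ∨ U.det = -1 := by rw [← hdetUM]; exact hMdet
  -- the key real computation: if a matrix maps B k to B' k (componentwise over ℤ),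
  -- casting to ℝ at index castSucc i gives the affine relation, and conversely.
  have keyfwd : ∀ k i, v' k i = (∑ j, (U i j : ℝ) * v k j) + (t i : ℝ) := by
    intro k i
    have h1 := congrFun (hMB k) (Fin.castSucc i)
    have h2 : ((M.mulVec (B k)) (Fin.castSucc i) : ℝ) = ((B' k) (Fin.castSucc i) : ℝ) := by
      exact_mod_cast congrArg (fun z : ℤ => (z : ℝ)) h1
    rw [Matrix.mulVec, dotProduct] at h2
    push_cast at h2
    rw [hB' k] at h2
    have h3 : (∑ j : Fin (n + 1), (M (Fin.castSucc i) j : ℝ) * ((B k) j : ℝ)) =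
        (den (v k) : ℝ) * ((∑ j, (U i j : ℝ) * v k j) + (t i : ℝ)) := by
      rw [Fin.sum_univ_castSucc]
      have e1 : ∀ j : Fin n, (M (Fin.castSucc i) (Fin.castSucc j) : ℝ) * ((B k) (Fin.castSucc j) : ℝ)
          = (den (v k) : ℝ) * ((U i j : ℝ) * v k j) := by
        intro j
        rw [hB k, htcast, hMrow]
        ring
      rw [Finset.sum_congr rfl (fun j _ => e1 j), hB k, htlast,
        show M (Fin.castSucc i) (Fin.last n) = t i from rfl, ← Finset.mul_sum]
      ring
    rw [h3, htcast, hden k] at h2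
    have hne : ((den (v' k) : ℝ)) ≠ 0 := by
      rw [← hden k]; exact ne_of_gt (dpos k)
    exact (mul_left_cancel₀ hne h2).symm
  refine ⟨(U, t), ⟨hUdet, keyfwd⟩, ?_⟩
  -- uniqueness
  rintro ⟨U₂, t₂⟩ ⟨-, hprop⟩
  set M₂ : Matrix (Fin (n + 1)) (Fin (n + 1)) ℤ :=
    Fin.snoc (fun i : Fin n => (Fin.snoc (U₂ i) (t₂ i) : Fin (n + 1) → ℤ))
      (Fin.snoc (0 : Fin n → ℤ) 1) with hM₂def
  have hM₂cc : ∀ (i j : Fin n), M₂ (Fin.castSucc i) (Fin.castSucc j) = U₂ i j := by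
    intro i j; rw [hM₂def]; simp
  have hM₂cl : ∀ (i : Fin n), M₂ (Fin.castSucc i) (Fin.last n) = t₂ i := by
    intro i; rw [hM₂def]; simp
  have hM₂lc : ∀ (j : Fin n), M₂ (Fin.last n) (Fin.castSucc j) = 0 := by
    intro j; rw [hM₂def]; simp
  have hM₂ll : M₂ (Fin.last n) (Fin.last n) = 1 := by rw [hM₂def]; simp
  have hM₂B : ∀ k, M₂.mulVec (B k) = B' k := by
    intro k
    funext i'
    rw [Matrix.mulVec, dotProduct]
    induction i' using Fin.lastCases with
    | last =>
      rw [Fin.sum_univ_castSucc]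
      simp only [hM₂lc, hM₂ll, zero_mul, Finset.sum_const_zero, one_mul, zero_add]
      rw [hlastB, hlastB', hden k]
    | cast i =>
      have hcast : ((∑ j : Fin (n + 1), M₂ (Fin.castSucc i) j * (B k) j : ℤ) : ℝ)
          = ((B' k) (Fin.castSucc i) : ℝ) := by
        push_cast
        rw [hB' k, htcast]
        rw [Fin.sum_univ_castSucc]
        have e1 : ∀ j : Fin n,
            (M₂ (Fin.castSucc i) (Fin.castSucc j) : ℝ) * ((B k) (Fin.castSucc j) : ℝ)
            = (den (v k) : ℝ) * ((U₂ i j : ℝ) * v k j) := by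
          intro j
          rw [hB k, htcast, hM₂cc]
          ring
        rw [Finset.sum_congr rfl (fun j _ => e1 j), hB k, htlast, hM₂cl, ← Finset.mul_sum]
        rw [hprop k i, hden k]
        ring
      exact_mod_cast hcast
  have hMM : M₂ = M := by
    have hlin : Matrix.toLin' M₂ = Matrix.toLin' M := by
      apply B.ext
      intro k
      rw [Matrix.toLin'_apply, Matrix.toLin'_apply, hM₂B, hMB]
    exact Matrix.toLin'.injective hlin
  refine Prod.ext ?_ ?_
  · funext i j
    show U₂ i j = U i j
    rw [← hM₂cc i j, hMM, hMrow]
  · funext i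
    show t₂ i = t i
    rw [← hM₂cl i, hMM, htdef]
end

section
/- Let ξ ∈ [0,1] be irrational, a = (1/5, ξ) and b = (2/5, ξ). Then G_a = G_b, but there is no γ ∈ 𝒢₂ with γ(a) = b. -/
/-- For irrational `ξ ∈ [0,1]`, the points `a = (1/5, ξ)` and
`b = (2/5, ξ)` satisfy `G_a = G_b`, yet no `γ ∈ 𝒢₂` maps `a` to `b`. -/
theorem same_group_not_same_orbit (ξ : ℝ) (hmem : ξ ∈ Set.Icc (0 : ℝ) 1)
    (hirr : Irrational ξ) :
    Gx ![(1/5 : ℝ), ξ] = Gx ![(2/5 : ℝ), ξ] ∧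
    ¬ SameOrbit 2 ![(1/5 : ℝ), ξ] ![(2/5 : ℝ), ξ] := by

  constructor
  · -- Both groups equal ℤ + ℤ(1/5) + ℤξ
    apply le_antisymm
    · rw [Gx, AddSubgroup.closure_le]
      rintro y (rfl | ⟨i, rfl⟩)
      · exact AddSubgroup.subset_closure (Set.mem_insert _ _)
      · fin_cases i
        · -- 1/5 = 3 • (2/5) - 1
          have h1 : (1 : ℝ) ∈ Gx ![(2/5 : ℝ), ξ] :=
            AddSubgroup.subset_closure (Set.mem_insert _ _)
          have h2 : (2/5 : ℝ) ∈ Gx ![(2/5 : ℝ), ξ] :=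
            AddSubgroup.subset_closure (Set.mem_insert_of_mem _ ⟨0, rfl⟩)
          show (1/5 : ℝ) ∈ Gx ![(2/5 : ℝ), ξ]
          have : (1/5 : ℝ) = (3 : ℤ) • (2/5 : ℝ) - 1 := by norm_num
          rw [this]
          exact sub_mem (zsmul_mem h2 3) h1
        · exact AddSubgroup.subset_closure (Set.mem_insert_of_mem _ ⟨1, rfl⟩)
    · rw [Gx, AddSubgroup.closure_le]
      rintro y (rfl | ⟨i, rfl⟩)
      · exact AddSubgroup.subset_closure (Set.mem_insert _ _)
      · fin_cases i
        · have h2 : (1/5 : ℝ) ∈ Gx ![(1/5 : ℝ), ξ] :=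
            AddSubgroup.subset_closure (Set.mem_insert_of_mem _ ⟨0, rfl⟩)
          show (2/5 : ℝ) ∈ Gx ![(1/5 : ℝ), ξ]
          have : (2/5 : ℝ) = (2 : ℤ) • (1/5 : ℝ) := by norm_num
          rw [this]
          exact zsmul_mem h2 2
        · exact AddSubgroup.subset_closure (Set.mem_insert_of_mem _ ⟨1, rfl⟩)
  · rintro ⟨U, t, hdet, heq⟩
    have h0 := heq 0
    have h1 := heq 1
    simp [Fin.sum_univ_two] at h0 h1
    -- from h1 : ξ = U 1 0 * (1/5) + U 1 1 * ξ + t 1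
    have hU11 : U 1 1 = 1 := by
      by_contra h
      have hne : U 1 1 - 1 ≠ 0 := by omega
      have : ((U 1 1 - 1 : ℤ) : ℝ) * ξ = (((-((U 1 0 : ℚ) * (1/5) + (t 1 : ℚ)) : ℚ)) : ℝ) := by
        push_cast
        linarith
      have hi : Irrational (((U 1 1 - 1 : ℤ) : ℝ) * ξ) := hirr.intCast_mul hne
      rw [this] at hi
      exact (Rat.not_irrational _) hi
    have hU01 : U 0 1 = 0 := by
      by_contra h
      have : ((U 0 1 : ℤ) : ℝ) * ξ = (((2/5 : ℚ) - (U 0 0 : ℚ) * (1/5) - (t 0 : ℚ) : ℚ) : ℝ) := by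
        push_cast
        linarith
      have hi : Irrational (((U 0 1 : ℤ) : ℝ) * ξ) := hirr.intCast_mul h
      rw [this] at hi
      exact (Rat.not_irrational _) hi
    -- now h0 : 2/5 = U 0 0 * (1/5) + t 0
    have hU00 : U 0 0 + 5 * t 0 = 2 := by
      have : ((U 0 0 + 5 * t 0 : ℤ) : ℝ) = ((2 : ℤ) : ℝ) := by
        push_cast
        rw [hU01] at h0
        push_cast at h0
        linarith
      exact_mod_cast this
    rw [Matrix.det_fin_two, hU11, hU01] at hdet
    simp at hdet
    omega
end

section
/- For n ≥ 1 and 0 ≤ e < n, let F be an e-dimensional rational affine space in ℝⁿ. Let conv(v₀,…,v_e) and conv(w₀,…,w_e) be two regular e-simplexes lying on F. If conv(v₀,…,v_e,v_{e+1},…,v_n) is a regular n-simplex for suitable points v_{e+1},…,v_n ∈ ℝⁿ, then conv(w₀,…,w_e,v_{e+1},…,v_n) is also a regular n-simplex. -/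
section AuxReplaceFace

open Finset Submodule

/-- Any `ℤ`-basis of `ℤᴺ`, cast coordinatewise into `ℝᴺ`, is `ℝ`-linearly independent. -/
theorem intCast_basis_linearIndependent {N : ℕ} (b : Module.Basis (Fin N) ℤ (Fin N → ℤ)) :
    LinearIndependent ℝ (fun j => (fun i => (((b j) i : ℤ) : ℝ)) : Fin N → Fin N → ℝ) := by
  classical
  apply linearIndependent_of_top_le_span_of_card_eq_finrank
  · intro x _
    have hsingle : ∀ i₀ : Fin N, (fun j => if i₀ = j then (1:ℝ) else 0) ∈
        Submodule.span ℝ (Set.range fun j => (fun i => (((b j) i : ℤ) : ℝ))) := by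
      intro i₀
      have hx : (Pi.single i₀ 1 : Fin N → ℤ) = ∑ j, b.repr (Pi.single i₀ 1) j • b j :=
        (b.sum_repr _).symm
      have hc : (fun j => if i₀ = j then (1:ℝ) else 0)
          = ∑ j, ((b.repr (Pi.single i₀ 1) j : ℝ)) • (fun i => (((b j) i : ℤ) : ℝ)) := by
        funext i
        rw [Finset.sum_apply]
        have h1 := congrFun hx i
        rw [Finset.sum_apply] at h1
        simp only [Pi.smul_apply, smul_eq_mul] at h1 ⊢
        have h2 : (((Pi.single i₀ 1 : Fin N → ℤ) i : ℤ) : ℝ)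
            = ∑ j, (b.repr (Pi.single i₀ 1) j : ℝ) * (((b j) i : ℤ) : ℝ) := by
          rw [h1]; push_cast; ring
        rw [← h2]
        by_cases h : i₀ = i
        · subst h; simp
        · simp [Pi.single_apply, h, Ne.symm h]
      rw [hc]
      exact sum_mem fun j _ => smul_mem _ _ (subset_span ⟨j, rfl⟩)
    have hx : x = ∑ i₀, x i₀ • (fun j => if i₀ = j then (1:ℝ) else 0) := by
      funext j; rw [Finset.sum_apply]
      simp [Pi.smul_apply, smul_eq_mul, mul_ite]
    rw [hx]
    exact sum_mem fun i₀ _ => smul_mem _ _ (hsingle i₀)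
  · simp [Module.finrank_fintype_fun_eq_card]

/-- If an integer vector lies (after casting to `ℝ`) in the real span of a
subfamily of a `ℤ`-basis of `ℤᴺ`, then it is an integer combination of that
subfamily. -/
theorem exists_int_coords {N m : ℕ} (b : Module.Basis (Fin N) ℤ (Fin N → ℤ))
    (g : Fin m → Fin N) (hg : Function.Injective g) (x : Fin N → ℤ)
    (hx : (fun i => ((x i : ℤ) : ℝ)) ∈ Submodule.span ℝ
      (Set.range fun k => (fun i => (((b (g k)) i : ℤ) : ℝ)))) :
    ∃ c : Fin m → ℤ, x = ∑ k, c k • b (g k) := by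
  classical
  obtain ⟨r, hr⟩ := (mem_span_range_iff_exists_fun ℝ).1 hx
  set Rc : Fin N → ℝ := fun j => if h : ∃ k, g k = j then r h.choose else 0 with hRc
  have hRg : ∀ k, Rc (g k) = r k := by
    intro k
    have h : ∃ k', g k' = g k := ⟨k, rfl⟩
    simp only [hRc, dif_pos h]
    exact congrArg r (hg h.choose_spec)
  have hR0 : ∀ j, (¬ ∃ k, g k = j) → Rc j = 0 := fun j h => dif_neg h
  have hsum : ∑ j, Rc j • (fun i => (((b j) i : ℤ) : ℝ)) = fun i => ((x i : ℤ) : ℝ) := by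
    rw [← hr]
    have hsub : (Finset.univ.map ⟨g, hg⟩ : Finset (Fin N)) ⊆ Finset.univ :=
      Finset.subset_univ _
    have hz : ∀ j ∈ Finset.univ, j ∉ Finset.univ.map ⟨g, hg⟩ →
        Rc j • (fun i => (((b j) i : ℤ) : ℝ)) = 0 := by
      intro j _ hj
      have : ¬ ∃ k, g k = j := by
        intro ⟨k, hk⟩
        exact hj (Finset.mem_map.2 ⟨k, Finset.mem_univ _, hk⟩)
      rw [hR0 j this, zero_smul]
    rw [← Finset.sum_subset hsub hz, Finset.sum_map]
    exact Finset.sum_congr rfl fun k _ => by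
      simp only [Function.Embedding.coeFn_mk, hRg]
  have hx2 : ∑ j, ((b.repr x j : ℤ) : ℝ) • (fun i => (((b j) i : ℤ) : ℝ))
      = fun i => ((x i : ℤ) : ℝ) := by
    funext i
    rw [Finset.sum_apply]
    have h1 : x i = ∑ j, b.repr x j * (b j) i := by
      conv_lhs => rw [← b.sum_repr x]
      rw [Finset.sum_apply]
      simp [Pi.smul_apply, smul_eq_mul]
    simp only [Pi.smul_apply, smul_eq_mul]
    rw [h1]; push_cast; ring
  have hli := intCast_basis_linearIndependent b
  have heq : ∀ j, ((b.repr x j : ℤ) : ℝ) = Rc j := by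
    have h0 : ∑ j, (((b.repr x j : ℤ) : ℝ) - Rc j) • (fun i => (((b j) i : ℤ) : ℝ)) = 0 := by
      simp only [sub_smul, Finset.sum_sub_distrib]
      rw [hx2, hsum, sub_self]
    intro j
    have := Fintype.linearIndependent_iff.1 hli _ h0 j
    linarith [this]
  have hzero : ∀ j, (¬ ∃ k, g k = j) → b.repr x j = 0 := by
    intro j hj
    have : ((b.repr x j : ℤ) : ℝ) = 0 := by rw [heq j, hR0 j hj]
    exact_mod_cast this
  refine ⟨fun k => b.repr x (g k), ?_⟩
  conv_lhs => rw [← b.sum_repr x]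
  have hz : ∀ j ∈ Finset.univ, j ∉ Finset.univ.map ⟨g, hg⟩ →
      b.repr x j • b j = 0 := by
    intro j _ hj
    have : ¬ ∃ k, g k = j := by
      intro ⟨k, hk⟩
      exact hj (Finset.mem_map.2 ⟨k, Finset.mem_univ _, hk⟩)
    rw [hzero j this, zero_smul]
  rw [← Finset.sum_subset (Finset.subset_univ _) hz, Finset.sum_map]
  rfl

/-- `Fin.snoc` as a linear map. -/
def snocLM (N : ℕ) : ((Fin N → ℝ) × ℝ) →ₗ[ℝ] (Fin (N+1) → ℝ) where
  toFun p := Fin.snoc p.1 p.2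
  map_add' p q := by
    funext i
    refine Fin.lastCases ?_ (fun j => ?_) i <;>
      simp [Fin.snoc_last, Fin.snoc_castSucc]
  map_smul' c p := by
    funext i
    refine Fin.lastCases ?_ (fun j => ?_) i <;>
      simp [Fin.snoc_last, Fin.snoc_castSucc]

theorem snocLM_apply {N : ℕ} (x : Fin N → ℝ) (a : ℝ) :
    snocLM N (x, a) = Fin.snoc x a := rfl

theorem den_pos_of_rational {n : ℕ} {y : Fin n → ℝ} (hy : IsRationalPoint y) :
    0 < den y := by
  classical
  have hne : {d : ℕ | 0 < d ∧ ∀ i, ∃ m : ℤ, (d : ℝ) * y i = (m : ℝ)}.Nonempty := by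
    choose q hq using hy
    refine ⟨∏ i, (q i).den, Finset.prod_pos (fun i _ => (q i).pos), fun i => ?_⟩
    obtain ⟨k, hk⟩ := Finset.dvd_prod_of_mem (fun i => (q i).den) (Finset.mem_univ i)
    refine ⟨(q i).num * k, ?_⟩
    rw [hq i, hk]
    push_cast
    have hnum : ((q i).num : ℝ) = (q i : ℝ) * ((q i).den : ℝ) := by
      have hden : ((q i).den : ℝ) ≠ 0 := by
        exact_mod_cast (q i).pos.ne'
      have h' : ((q i).num : ℝ) / ((q i).den : ℝ) = (q i : ℝ) := by
        exact_mod_cast congrArg (Rat.cast : ℚ → ℝ) (Rat.num_div_den (q i))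
      rw [← h']
      field_simp
    rw [hnum]; ring
  exact (Nat.sInf_mem hne).1

theorem tildeR_eq_smul_snoc {n : ℕ} (y : Fin n → ℝ) :
    tildeR y = (den y : ℝ) • snocLM n (y, 1) := by
  funext i
  simp [tildeR, snocLM_apply, Pi.smul_apply, smul_eq_mul]

/-- A rational point of `F` has its homogeneous correspondent in the real span of
the homogeneous correspondents of the vertices of any rational `e`-simplex on the
`e`-dimensional set `F`. -/
theorem tildeR_mem_span {n e : ℕ} (F : Set (Fin n → ℝ)) (hFdim : affDim F = e)
    (p : Fin (e+1) → Fin n → ℝ) (hp : AffineIndependent ℝ p) (hpF : ∀ k, p k ∈ F)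
    (hprat : ∀ k, IsRationalPoint (p k)) (q : Fin n → ℝ) (hq : q ∈ F)
    (hqrat : IsRationalPoint q) :
    tildeR q ∈ Submodule.span ℝ (Set.range fun k => tildeR (p k)) := by
  have hspanEq : Submodule.span ℝ (Set.range fun k => tildeR (p k))
      = Submodule.span ℝ (Set.range fun k => snocLM n (p k, 1)) := by
    apply le_antisymm <;> rw [Submodule.span_le] <;> rintro _ ⟨k, rfl⟩
    · show tildeR (p k) ∈ (span ℝ (Set.range fun k => snocLM n (p k, 1)) : Set _)
      rw [tildeR_eq_smul_snoc]
      exact smul_mem _ _ (subset_span ⟨k, rfl⟩)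
    · show snocLM n (p k, 1) ∈ (span ℝ (Set.range fun k => tildeR (p k)) : Set _)
      have hd : ((den (p k) : ℝ)) ≠ 0 := by
        exact_mod_cast (den_pos_of_rational (hprat k)).ne'
      have : snocLM n (p k, 1) = ((den (p k) : ℝ))⁻¹ • tildeR (p k) := by
        rw [tildeR_eq_smul_snoc, inv_smul_smul₀ hd]
      rw [this]
      exact smul_mem _ _ (subset_span ⟨k, rfl⟩)
  have hvs : vectorSpan ℝ (Set.range p) = vectorSpan ℝ F := by
    apply Submodule.eq_of_le_of_finrank_eq
    · apply vectorSpan_mono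
      rintro _ ⟨k, rfl⟩
      exact hpF k
    · rw [hp.finrank_vectorSpan (Fintype.card_fin _)]
      exact hFdim.symm
  have hmem : q -ᵥ p 0 ∈ vectorSpan ℝ F := vsub_mem_vectorSpan ℝ hq (hpF 0)
  rw [← hvs, vectorSpan_range_eq_span_range_vsub_right ℝ p 0] at hmem
  obtain ⟨c, hc⟩ := (mem_span_range_iff_exists_fun ℝ).1 hmem
  have key : snocLM n (q, 1) = snocLM n (p 0, 1)
      + ∑ k, c k • (snocLM n (p k, 1) - snocLM n (p 0, 1)) := by
    have hprod : ((q, (1:ℝ)) : (Fin n → ℝ) × ℝ)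
        = (p 0, 1) + ∑ k, c k • (((p k, 1) : (Fin n → ℝ) × ℝ) - (p 0, 1)) := by
      apply Prod.ext
      · simp only [Prod.fst_add, Prod.fst_sum, Prod.smul_fst, Prod.fst_sub]
        have := hc
        simp only [vsub_eq_sub] at this
        rw [this]
        abel
      · simp only [Prod.snd_add, Prod.snd_sum, Prod.smul_snd, Prod.snd_sub,
          sub_self, smul_zero, Finset.sum_const_zero, add_zero]
    rw [hprod, map_add, map_sum]
    simp only [map_smul, map_sub]
  rw [hspanEq, tildeR_eq_smul_snoc]
  refine smul_mem _ _ ?_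
  rw [key]
  exact add_mem (subset_span ⟨0, rfl⟩)
    (sum_mem fun k _ => smul_mem _ _
      (sub_mem (subset_span ⟨k, rfl⟩) (subset_span ⟨0, rfl⟩)))

theorem affineIndependent_of_snoc {n : ℕ} {ι : Type*} [Fintype ι] (p : ι → Fin n → ℝ)
    (h : LinearIndependent ℝ fun k => (Fin.snoc (p k) 1 : Fin (n+1) → ℝ)) :
    AffineIndependent ℝ p := by
  rw [affineIndependent_iff_of_fintype]
  intro w hw hs
  rw [Finset.univ.weightedVSub_eq_linear_combination hw] at hs
  apply Fintype.linearIndependent_iff.1 h w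
  have : ∀ k, (Fin.snoc (p k) 1 : Fin (n+1) → ℝ) = snocLM n (p k, 1) := fun k => rfl
  simp only [this]
  have hsum : (∑ k, w k • ((p k, 1) : (Fin n → ℝ) × ℝ)) = (∑ k, w k • p k, ∑ k, w k) := by
    apply Prod.ext
    · simp [Prod.fst_sum]
    · simp [Prod.snd_sum, smul_eq_mul]
  calc ∑ k, w k • snocLM n (p k, 1) = snocLM n (∑ k, w k • ((p k, 1) : (Fin n → ℝ) × ℝ)) := by
        rw [map_sum]; simp only [map_smul]
    _ = 0 := by rw [hsum, hs, hw]; simp [snocLM_apply]; exact map_zero (snocLM n)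
      
/-- Sum over `Fin (n+1)` of a function vanishing above `e` equals the sum over the
first `e+1` indices. -/
theorem sum_eq_sum_castLE {M : Type*} [AddCommMonoid M] {n e : ℕ} (hle : e + 1 ≤ n + 1)
    (g : Fin (n+1) → M) (hg : ∀ j : Fin (n+1), ¬ (j:ℕ) ≤ e → g j = 0) :
    ∑ j, g j = ∑ i : Fin (e+1), g (Fin.castLE hle i) := by
  classical
  have h1 : ∑ j ∈ Finset.univ.map ⟨Fin.castLE hle, Fin.castLE_injective hle⟩, g j
      = ∑ i : Fin (e+1), g (Fin.castLE hle i) := Finset.sum_map _ _ _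
  rw [← h1]
  refine (Finset.sum_subset (Finset.subset_univ _) ?_).symm
  intro j _ hj
  apply hg
  intro hje
  apply hj
  refine Finset.mem_map.2 ⟨⟨(j:ℕ), by omega⟩, Finset.mem_univ _, ?_⟩
  simp [Function.Embedding.coeFn_mk, Fin.ext_iff]

end AuxReplaceFace

/-- Let `F` be an `e`-dimensional rational affine space in `ℝⁿ`
(`0 ≤ e < n`), and let `conv(v₀,…,v_e)`, `conv(w₀,…,w_e)` be regular `e`-simplexes
lying on `F`. If `conv(v₀,…,v_e,V_{e+1},…,V_n)` is a regular `n`-simplex, then so is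
`conv(w₀,…,w_e,V_{e+1},…,V_n)`. -/
theorem regular_simplex_replace_face (n e : ℕ) (hn : 1 ≤ n) (he : e < n)
    (F : Set (Fin n → ℝ)) (hF : IsRatAffineSpace F)
    (hFne : F.Nonempty) (hFdim : affDim F = e)
    (v w : Fin (e + 1) → (Fin n → ℝ))
    (hv : IsRegularSimplex v) (hw : IsRegularSimplex w)
    (hvF : ∀ k, v k ∈ F) (hwF : ∀ k, w k ∈ F)
    (V : Fin (n + 1) → (Fin n → ℝ)) (hV : IsRegularSimplex V)
    (hVv : ∀ k : Fin (e + 1), V (Fin.castLE (by omega) k) = v k) :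
    IsRegularSimplex (fun k : Fin (n + 1) =>
      if h : (k : ℕ) ≤ e then w ⟨(k : ℕ), by omega⟩ else V k) := by
  classical
  open Finset Submodule in
  obtain ⟨hVaff, hVrat, bV0, fV, hbV0⟩ := hV
  obtain ⟨hwaff, hwrat, bw, fw, hbw⟩ := hw
  have hvaff : AffineIndependent ℝ v := hv.1
  have hvrat := hv.2.1
  have hle : e + 1 ≤ n + 1 := by omega
  -- reindex the basis coming from `V` so that index `k` corresponds to `V k`
  have hfVbij : Function.Bijective fV :=
    (Fintype.bijective_iff_injective_and_card fV).2 ⟨fV.injective, rfl⟩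
  set eV : Fin (n+1) ≃ Fin (n+1) := Equiv.ofBijective fV hfVbij with heV
  set bV : Module.Basis (Fin (n+1)) ℤ (Fin (n+1) → ℤ) := bV0.reindex eV.symm with hbVdef
  have hbV : ∀ k i, ((bV k) i : ℝ) = tildeR (V k) i := by
    intro k i
    have h1 : bV k = bV0 (fV k) := by
      rw [hbVdef, Module.Basis.reindex_apply, Equiv.symm_symm]
      rfl
    rw [h1]; exact hbV0 k i
  have hvt : ∀ (k : Fin (e+1)) i, ((bV (Fin.castLE hle k)) i : ℝ) = tildeR (v k) i := by
    intro k i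
    rw [← hVv k]
    exact hbV (Fin.castLE hle k) i
  -- integer matrices relating the two faces
  have hA : ∀ k : Fin (e+1), ∃ c : Fin (e+1) → ℤ,
      bw (fw k) = ∑ i, c i • bV (Fin.castLE hle i) := by
    intro k
    apply exists_int_coords bV (fun i => Fin.castLE hle i) (Fin.castLE_injective hle)
    have h1 : (fun i => (((bw (fw k)) i : ℤ) : ℝ)) = tildeR (w k) := funext (hbw k)
    have h2 : (fun j => (fun i => (((bV ((fun i => Fin.castLE hle i) j)) i : ℤ) : ℝ)))
        = fun j => tildeR (v j) := funext fun j => funext (hvt j)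
    rw [h1, h2]
    exact tildeR_mem_span F hFdim v hvaff hvF hvrat (w k) (hwF k) (hwrat k)
  have hB : ∀ k : Fin (e+1), ∃ c : Fin (e+1) → ℤ,
      bV (Fin.castLE hle k) = ∑ i, c i • bw (fw i) := by
    intro k
    apply exists_int_coords bw (fun i => fw i) fw.injective
    have h1 : (fun i => (((bV (Fin.castLE hle k)) i : ℤ) : ℝ)) = tildeR (v k) :=
      funext (hvt k)
    have h2 : (fun j => (fun i => (((bw ((fun i => fw i) j)) i : ℤ) : ℝ)))
        = fun j => tildeR (w j) := funext fun j => funext (hbw j)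
    rw [h1, h2]
    exact tildeR_mem_span F hFdim w hwaff hwF hwrat (v k) (hvF k) (hvrat k)
  choose A hAeq using hA
  choose B hBeq using hB
  have hvli : LinearIndependent ℤ (fun k : Fin (e+1) => bV (Fin.castLE hle k)) :=
    bV.linearIndependent.comp _ (Fin.castLE_injective hle)
  have hBA : ∀ k j, (∑ i, B k i * A i j) = if k = j then 1 else 0 := by
    intro k j
    have h2 : ∀ i, B k i • bw (fw i)
        = ∑ j', (B k i * A i j') • bV (Fin.castLE hle j') := by
      intro i
      rw [hAeq i, Finset.smul_sum]
      exact Finset.sum_congr rfl fun j' _ => smul_smul _ _ _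
    have h1 : bV (Fin.castLE hle k)
        = ∑ j', (∑ i, B k i * A i j') • bV (Fin.castLE hle j') := by
      rw [hBeq k]
      calc ∑ i, B k i • bw (fw i)
          = ∑ i, ∑ j', (B k i * A i j') • bV (Fin.castLE hle j') :=
            Finset.sum_congr rfl fun i _ => h2 i
        _ = ∑ j', ∑ i, (B k i * A i j') • bV (Fin.castLE hle j') := Finset.sum_comm
        _ = ∑ j', (∑ i, B k i * A i j') • bV (Fin.castLE hle j') :=
            Finset.sum_congr rfl fun j' _ => (Finset.sum_smul).symm
    have hdelta : ∑ j', (if k = j' then (1:ℤ) else 0) • bV (Fin.castLE hle j')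
        = bV (Fin.castLE hle k) := by
      simp [ite_smul]
    have h0 : ∑ j', ((∑ i, B k i * A i j') - if k = j' then 1 else 0)
        • bV (Fin.castLE hle j') = 0 := by
      simp only [sub_smul, Finset.sum_sub_distrib]
      rw [← h1, hdelta, sub_self]
    exact sub_eq_zero.mp (Fintype.linearIndependent_iff.1 hvli _ h0 j)
  -- determinant of A is a unit
  set MA : Matrix (Fin (e+1)) (Fin (e+1)) ℤ := Matrix.of A with hMA
  set MB : Matrix (Fin (e+1)) (Fin (e+1)) ℤ := Matrix.of B with hMB
  have hmul : MB * MA = 1 := by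
    ext k j
    rw [Matrix.mul_apply, Matrix.one_apply]
    exact hBA k j
  have hMAdet : IsUnit MA.det := by
    have h := congrArg Matrix.det hmul
    rw [Matrix.det_mul, Matrix.det_one] at h
    exact IsUnit.of_mul_eq_one _ ((mul_comm MB.det MA.det) ▸ h)
  -- the block matrix
  have hcard : (e+1) + (n - e) = n + 1 := by omega
  set ee : Fin (e+1) ⊕ Fin (n-e) ≃ Fin (n+1) := finSumFinEquiv.trans (finCongr hcard)
    with hee
  set C : Matrix (Fin (n+1)) (Fin (n+1)) ℤ :=
    (Matrix.reindex ee ee (Matrix.fromBlocks MA 0 0 1)) with hC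
  have hCdet : IsUnit C.det := by
    rw [hC, Matrix.det_reindex_self, Matrix.det_fromBlocks_zero₂₁, Matrix.det_one, mul_one]
    exact hMAdet
  have hee1 : ∀ i : Fin (e+1), ee (Sum.inl i) = Fin.castLE hle i := by
    intro i
    ext
    simp [hee, finSumFinEquiv]
  have hee2 : ∀ j : Fin (n-e), ((ee (Sum.inr j)) : ℕ) = (e+1) + j := by
    intro j
    simp [hee, finSumFinEquiv]
  have hsymm1 : ∀ q : Fin (n+1), ∀ hq : (q:ℕ) ≤ e, ee.symm q = Sum.inl ⟨(q:ℕ), by omega⟩ := by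
    intro q hq
    rw [Equiv.symm_apply_eq, hee1]
    ext
    simp
  have hsymm2 : ∀ q : Fin (n+1), ∀ hq : ¬(q:ℕ) ≤ e,
      ee.symm q = Sum.inr ⟨(q:ℕ) - (e+1), by have := q.isLt; omega⟩ := by
    intro q hq
    rw [Equiv.symm_apply_eq]
    apply Fin.ext
    rw [hee2]
    simp
    omega
  have hC1 : ∀ (p q : Fin (n+1)) (hp : (p:ℕ) ≤ e) (hq : (q:ℕ) ≤ e),
      C p q = A ⟨(p:ℕ), by omega⟩ ⟨(q:ℕ), by omega⟩ := by
    intro p q hp hq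
    rw [hC, Matrix.reindex_apply, Matrix.submatrix_apply, hsymm1 p hp, hsymm1 q hq,
      Matrix.fromBlocks_apply₁₁]
    rfl
  have hC2 : ∀ (p q : Fin (n+1)), (p:ℕ) ≤ e → ¬(q:ℕ) ≤ e → C p q = 0 := by
    intro p q hp hq
    rw [hC, Matrix.reindex_apply, Matrix.submatrix_apply, hsymm1 p hp, hsymm2 q hq,
      Matrix.fromBlocks_apply₁₂]
    rfl
  have hC3 : ∀ (p q : Fin (n+1)), ¬(p:ℕ) ≤ e → C p q = if p = q then 1 else 0 := by
    intro p q hp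
    by_cases hq : (q:ℕ) ≤ e
    · rw [hC, Matrix.reindex_apply, Matrix.submatrix_apply, hsymm2 p hp, hsymm1 q hq,
        Matrix.fromBlocks_apply₂₁]
      have hne : p ≠ q := fun h => by subst h; exact hp hq
      simp [hne]
    · rw [hC, Matrix.reindex_apply, Matrix.submatrix_apply, hsymm2 p hp, hsymm2 q hq,
        Matrix.fromBlocks_apply₂₂, Matrix.one_apply]
      have hiff : ((⟨(p:ℕ) - (e+1), by have := p.isLt; omega⟩ : Fin (n-e))
          = ⟨(q:ℕ) - (e+1), by have := q.isLt; omega⟩) ↔ p = q := by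
        simp only [Fin.mk.injEq, Fin.ext_iff]
        constructor <;> intro h <;> (have := p.isLt; have := q.isLt; omega)
      by_cases h : p = q
      · rw [if_pos (hiff.2 h), if_pos h]
      · rw [if_neg (fun hh => h (hiff.1 hh)), if_neg h]
  -- the new basis
  have hCTdet : IsUnit (C.transpose).det := by rwa [Matrix.det_transpose]
  set bNew : Module.Basis (Fin (n+1)) ℤ (Fin (n+1) → ℤ) :=
    bV.map (Matrix.toLinearEquiv bV C.transpose hCTdet) with hbNewdef
  have hbNew : ∀ p, bNew p = ∑ q, C p q • bV q := by
    intro p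
    rw [hbNewdef, Module.Basis.map_apply, Matrix.toLinearEquiv_apply, Matrix.toLin_self]
    exact Finset.sum_congr rfl fun q _ => by rw [Matrix.transpose_apply]
  have hrow1 : ∀ p : Fin (n+1), ∀ hp : (p:ℕ) ≤ e, bNew p = bw (fw ⟨(p:ℕ), by omega⟩) := by
    intro p hp
    rw [hbNew p, sum_eq_sum_castLE hle _ (fun j hj => by rw [hC2 p j hp hj, zero_smul]),
      hAeq ⟨(p:ℕ), by omega⟩]
    apply Finset.sum_congr rfl
    intro i _
    have hile : ((Fin.castLE hle i : Fin (n+1)) : ℕ) ≤ e := by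
      simp
      omega
    rw [hC1 p (Fin.castLE hle i) hp hile]
    have hfin : (⟨((Fin.castLE hle i : Fin (n+1)) : ℕ), by omega⟩ : Fin (e+1)) = i := by
      ext
      simp
    rw [hfin]
  have hrow2 : ∀ p : Fin (n+1), ¬(p:ℕ) ≤ e → bNew p = bV p := by
    intro p hp
    rw [hbNew p]
    have h1 : ∑ q, C p q • bV q = ∑ q, (if p = q then (1:ℤ) else 0) • bV q :=
      Finset.sum_congr rfl fun q _ => by rw [hC3 p q hp]
    rw [h1]
    simp [ite_smul]
  have hbNewCast : ∀ (k : Fin (n+1)) (i : Fin (n+1)), ((bNew k) i : ℝ)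
      = tildeR ((fun k : Fin (n + 1) =>
        if h : (k : ℕ) ≤ e then w ⟨(k : ℕ), by omega⟩ else V k) k) i := by
    intro k i
    by_cases hk : (k:ℕ) ≤ e
    · rw [hrow1 k hk]
      simp only [dif_pos hk]
      exact hbw ⟨(k:ℕ), by omega⟩ i
    · rw [hrow2 k hk]
      simp only [dif_neg hk]
      exact hbV k i
  -- assemble the regular simplex
  have main : ∀ u : Fin (n+1) → (Fin n → ℝ), (∀ k, IsRationalPoint (u k)) →
      (∀ k i, ((bNew k) i : ℝ) = tildeR (u k) i) → IsRegularSimplex u := by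
    intro u hurat hcast
    refine ⟨?_, hurat, bNew, Function.Embedding.refl _, fun k i => hcast k i⟩
    have hli := intCast_basis_linearIndependent bNew
    have hfun : (fun k => (fun i => (((bNew k) i : ℤ) : ℝ))) = fun k => tildeR (u k) :=
      funext fun k => funext fun i => hcast k i
    rw [hfun] at hli
    apply affineIndependent_of_snoc
    have hden : ∀ k, ((den (u k) : ℝ)) ≠ 0 := fun k => by
      exact_mod_cast (den_pos_of_rational (hurat k)).ne'
    have h2 := hli.units_smul
      (fun k => Units.mk0 ((den (u k) : ℝ))⁻¹ (inv_ne_zero (hden k)))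
    have h3 : ((fun k => Units.mk0 ((den (u k) : ℝ))⁻¹ (inv_ne_zero (hden k)))
        • fun k => tildeR (u k)) = fun k => (Fin.snoc (u k) 1 : Fin (n+1) → ℝ) := by
      funext k
      show ((den (u k) : ℝ))⁻¹ • tildeR (u k) = _
      rw [tildeR_eq_smul_snoc (u k), inv_smul_smul₀ (hden k)]
      rfl
    rw [h3] at h2
    exact h2
  apply main
  · intro k
    by_cases hk : (k:ℕ) ≤ e
    · simp only [dif_pos hk]
      exact hwrat _
    · simp only [dif_neg hk]
      exact hVrat k
  · exact hbNewCast
end
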